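/- arXiv:1306.1727 — 5 statements merged into one kernel-verified Lean document; each statement's English description precedes it below -/
import Mathlib

section
/- Let ω₁, ω₂ be analytic in the unit disk E with |ω₁(z)| < 1 and |ω₂(z)| < 1 for all z ∈ E, and let t ∈ [0,1]. Then the function ω = (t·ω₁ + (1-t)·ω₂ + ω₁·ω₂)/(1 + t·ω₂ + (1-t)·ω₁) satisfies |ω(z)| < 1 for all z ∈ E. -/
set_option maxHeartbeats 1000000 in
lemma stmt_2_aux (t a b c d : ℝ) (ht0 : 0 ≤ t) (ht1 : t ≤ 1)
    (ha : a ^ 2 + b ^ 2 < 1) (hc : c ^ 2 + d ^ 2 < 1) :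
    (t * a + (1 - t) * c + (a * c - b * d)) ^ 2 + (t * b + (1 - t) * d + (a * d + b * c)) ^ 2
      < (1 + t * c + (1 - t) * a) ^ 2 + (t * d + (1 - t) * b) ^ 2 := by
  have hP : 0 < (1 + c) ^ 2 + d ^ 2 := by
    nlinarith [sq_nonneg (1 + c), sq_nonneg d, sq_nonneg (1 - c ^ 2 - d ^ 2)]
  have hQ : 0 < (1 + a) ^ 2 + b ^ 2 := by
    nlinarith [sq_nonneg (1 + a), sq_nonneg b, sq_nonneg (1 - a ^ 2 - b ^ 2)]
  have hD : (1 + t * c + (1 - t) * a) ^ 2 + (t * d + (1 - t) * b) ^ 2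
      - ((t * a + (1 - t) * c + (a * c - b * d)) ^ 2 + (t * b + (1 - t) * d + (a * d + b * c)) ^ 2)
      = t * ((1 - (a ^ 2 + b ^ 2)) * ((1 + c) ^ 2 + d ^ 2))
        + (1 - t) * ((1 - (c ^ 2 + d ^ 2)) * ((1 + a) ^ 2 + b ^ 2)) := by ring
  rcases eq_or_lt_of_le ht0 with h | h
  · subst h
    nlinarith [mul_pos (show (0:ℝ) < 1 - (c ^ 2 + d ^ 2) by linarith) hQ]
  · nlinarith [mul_pos h (mul_pos (show (0:ℝ) < 1 - (a ^ 2 + b ^ 2) by linarith) hP),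
      mul_nonneg (by linarith : (0:ℝ) ≤ 1 - t)
        (mul_nonneg (by linarith : (0:ℝ) ≤ 1 - (c ^ 2 + d ^ 2)) hQ.le)]

theorem stmt_2 (ω₁ ω₂ : ℂ → ℂ)
    (h₁ : AnalyticOn ℂ ω₁ (Metric.ball (0 : ℂ) 1))
    (h₂ : AnalyticOn ℂ ω₂ (Metric.ball (0 : ℂ) 1))
    (hb₁ : ∀ z ∈ Metric.ball (0 : ℂ) 1, ‖ω₁ z‖ < 1)
    (hb₂ : ∀ z ∈ Metric.ball (0 : ℂ) 1, ‖ω₂ z‖ < 1)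
    (t : ℝ) (ht : t ∈ Set.Icc (0 : ℝ) 1) :
    ∀ z ∈ Metric.ball (0 : ℂ) 1,
      ‖(t * ω₁ z + (1 - t) * ω₂ z + ω₁ z * ω₂ z)
        / (1 + t * ω₂ z + (1 - t) * ω₁ z)‖ < 1 := by
  intro z hz
  obtain ⟨ht0, ht1⟩ := ht
  have hw1 := hb₁ z hz
  have hw2 := hb₂ z hz
  set w1 := ω₁ z with hW1
  set w2 := ω₂ z with hW2
  have hn1 : Complex.normSq w1 < 1 := by
    rw [← Complex.sq_norm]; nlinarith [norm_nonneg w1]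
  have hn2 : Complex.normSq w2 < 1 := by
    rw [← Complex.sq_norm]; nlinarith [norm_nonneg w2]
  rw [Complex.normSq_apply] at hn1 hn2
  set a := w1.re; set b := w1.im; set c := w2.re; set d := w2.im
  have ha : a ^ 2 + b ^ 2 < 1 := by nlinarith
  have hc : c ^ 2 + d ^ 2 < 1 := by nlinarith
  have key : Complex.normSq ((t : ℂ) * w1 + (1 - t) * w2 + w1 * w2) <
      Complex.normSq (1 + t * w2 + (1 - t) * w1) := by
    have e1 : Complex.normSq ((t : ℂ) * w1 + (1 - t) * w2 + w1 * w2)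
        = (t * a + (1 - t) * c + (a * c - b * d)) ^ 2
          + (t * b + (1 - t) * d + (a * d + b * c)) ^ 2 := by
      simp [Complex.normSq_apply, Complex.add_re, Complex.add_im, Complex.mul_re,
        Complex.mul_im, Complex.sub_re, Complex.sub_im]
      ring
    have e2 : Complex.normSq (1 + (t : ℂ) * w2 + (1 - t) * w1)
        = (1 + t * c + (1 - t) * a) ^ 2 + (t * d + (1 - t) * b) ^ 2 := by
      simp [Complex.normSq_apply, Complex.add_re, Complex.add_im, Complex.mul_re,
        Complex.mul_im, Complex.sub_re, Complex.sub_im]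
      ring
    rw [e1, e2]
    exact stmt_2_aux t a b c d ht0 ht1 ha hc
  have habs : ‖(t : ℂ) * w1 + (1 - t) * w2 + w1 * w2‖ <
      ‖1 + t * w2 + (1 - t) * w1‖ := by
    rw [Complex.norm_def, Complex.norm_def]
    exact Real.sqrt_lt_sqrt (Complex.normSq_nonneg _) key
  rw [norm_div, div_lt_one (lt_of_le_of_lt (norm_nonneg _) habs)]
  exact habs
end

section
/- Let α₁, α₂ ∈ [-1,1] with α₁ ≥ α₂. Then every root of the quadratic polynomial q(z) = z² - (α₁+α₂)z - (α₁-α₂-1) lies in the closed unit disk |z| ≤ 1. -/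
theorem stmt_6 (α₁ α₂ : ℝ) (hα₁ : α₁ ∈ Set.Icc (-1 : ℝ) 1) (hα₂ : α₂ ∈ Set.Icc (-1 : ℝ) 1)
    (hle : α₂ ≤ α₁) (z : ℂ)
    (hz : z ^ 2 - ((α₁ + α₂ : ℝ) : ℂ) * z - ((α₁ - α₂ - 1 : ℝ) : ℂ) = 0) :
    ‖z‖ ≤ 1 := by
  obtain ⟨ha1, ha2⟩ := hα₁
  obtain ⟨hb1, hb2⟩ := hα₂
  set x := z.re with hx
  set y := z.im with hy
  have h1 : x^2 - y^2 - (α₁ + α₂) * x - (α₁ - α₂ - 1) = 0 := by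
    have := congrArg Complex.re hz
    simpa [pow_two, Complex.mul_re, Complex.mul_im, sq] using this
  have h2 : 2 * x * y - (α₁ + α₂) * y = 0 := by
    have := congrArg Complex.im hz
    simp [pow_two, Complex.mul_re, Complex.mul_im] at this
    linarith
  have hsq : x^2 + y^2 ≤ 1 := by
    rcases mul_eq_zero.mp (show y * (2 * x - (α₁ + α₂)) = 0 by ring_nf; linarith) with h | h
    · rw [h] at h1 ⊢
      by_contra hc
      push_neg at hc
      rcases lt_or_ge 1 x with hx1 | hx1
      · nlinarith [mul_pos (sub_pos.mpr hx1) (show 0 < x + 1 - (α₁ + α₂) by linarith)]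
      · have hx2 : x < -1 := by nlinarith
        nlinarith [mul_pos (show 0 < -(x+1) by linarith) (show 0 < -(x - 1 - (α₁ + α₂)) by linarith)]
    · have hx2 : x = (α₁ + α₂) / 2 := by linarith
      nlinarith
  have habs := Complex.sq_norm z
  have : ‖z‖^2 ≤ 1 := by
    rw [habs, Complex.normSq_apply]; nlinarith
  nlinarith [norm_nonneg z]
end

section
/- Let α₁, α₂ ∈ [-1,1] with α₁ ≥ α₂ and t ∈ [0,1]. Then every root of the cubic γ(z) = z³ + (2t-1-2α₁t-2α₂(1-t))z² + (1+2α₂(1-t)-2α₁t)z + (2t-1) lies in the closed unit disk |z| ≤ 1. -/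
theorem hurwitz_key (a b c d x y : ℝ) (ha : 0 ≤ a) (hb : 0 ≤ b) (hc : 0 ≤ c) (hd : 0 ≤ d)
    (hbc : a*d ≤ b*c) (hsum : 0 < a+b+c+d) (hx : 0 < x)
    (hre : a*(x^3-3*x*y^2) + b*(x^2-y^2) + c*x + d = 0)
    (him : y*(a*(3*x^2-y^2) + 2*b*x + c) = 0) : False := by
  rcases mul_eq_zero.mp him with hy | hS
  · subst hy
    have h1 : a * x^3 = 0 := le_antisymm (by nlinarith [mul_nonneg hb (sq_nonneg x), mul_nonneg hc hx.le]) (by positivity)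
    have ha0 : a = 0 := by
      rcases mul_eq_zero.mp h1 with h | h
      · exact h
      · exact absurd h (by positivity)
    have h2 : b * x^2 = 0 := le_antisymm (by nlinarith [mul_nonneg hc hx.le]) (by positivity)
    have hb0 : b = 0 := by
      rcases mul_eq_zero.mp h2 with h | h
      · exact h
      · exact absurd h (by positivity)
    have h3 : c * x = 0 := le_antisymm (by nlinarith) (by positivity)
    have hc0 : c = 0 := by
      rcases mul_eq_zero.mp h3 with h | h
      · exact h
      · exact absurd h (by positivity)
    have hd0 : d = 0 := by nlinarith
    linarith
  · have key : 8*a^2*x^3 + 8*a*b*x^2 + 2*a*c*x + 2*b^2*x + (b*c - a*d) = 0 := by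
      linear_combination (3*a*x+b)*hS - a*hre
    have h1 : a^2 * x^3 = 0 := le_antisymm
      (by nlinarith [mul_nonneg (mul_nonneg ha hb) (sq_nonneg x), mul_nonneg (mul_nonneg ha hc) hx.le,
          mul_nonneg (mul_nonneg hb hb) hx.le]) (by positivity)
    have ha0 : a = 0 := by
      rcases mul_eq_zero.mp h1 with h | h
      · exact (pow_eq_zero_iff two_ne_zero).mp h
      · exact absurd h (by positivity)
    rw [ha0] at key hbc
    have h2 : b^2 * x = 0 := le_antisymm (by nlinarith [mul_nonneg hb hc]) (by positivity)
    have hb0 : b = 0 := by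
      rcases mul_eq_zero.mp h2 with h | h
      · exact (pow_eq_zero_iff two_ne_zero).mp h
      · exact absurd h (by positivity)
    have hc0 : c = 0 := by
      have := hS; rw [ha0, hb0] at this; linarith
    have hd0 : d = 0 := by
      have := hre; rw [ha0, hb0, hc0] at this; linarith
    linarith

theorem stmt_9 (α₁ α₂ : ℝ) (hα₁ : α₁ ∈ Set.Icc (-1 : ℝ) 1) (hα₂ : α₂ ∈ Set.Icc (-1 : ℝ) 1)
    (hle : α₂ ≤ α₁) (t : ℝ) (ht : t ∈ Set.Icc (0 : ℝ) 1) (z : ℂ)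
    (hz : z ^ 3 + ((2*t - 1 - 2*α₁*t - 2*α₂*(1 - t) : ℝ) : ℂ) * z ^ 2
        + ((1 + 2*α₂*(1 - t) - 2*α₁*t : ℝ) : ℂ) * z + ((2*t - 1 : ℝ) : ℂ) = 0) :
    ‖z‖ ≤ 1 := by
  by_contra hcon
  push_neg at hcon
  obtain ⟨ht0, ht1⟩ := ht
  obtain ⟨ha1, ha2⟩ := hα₁
  obtain ⟨hb1, hb2⟩ := hα₂
  have hz1 : z ≠ 1 := by
    intro h; rw [h] at hcon; simp at hcon
  have hne : z - 1 ≠ 0 := sub_ne_zero.mpr hz1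
  set w : ℂ := (z+1)/(z-1) with hw_def
  push_cast at hz
  have hP : ((t*(1-α₁) : ℝ):ℂ)*w^3 + (((1-t)*(1-α₂) : ℝ):ℂ)*w^2
      + ((t*(1+α₁) : ℝ):ℂ)*w + (((1-t)*(1+α₂) : ℝ):ℂ) = 0 := by
    rw [hw_def]
    field_simp
    push_cast
    linear_combination (2 : ℂ) * hz
  set a : ℝ := t*(1-α₁) with ha_def
  set b : ℝ := (1-t)*(1-α₂) with hb_def
  set c : ℝ := t*(1+α₁) with hc_def
  set d : ℝ := (1-t)*(1+α₂) with hd_def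
  set x : ℝ := w.re with hx_def
  set y : ℝ := w.im with hy_def
  rw [Complex.ext_iff] at hP
  obtain ⟨hre, him⟩ := hP
  simp [pow_succ, Complex.mul_re, Complex.mul_im] at hre him
  have hre' : a*(x^3-3*x*y^2) + b*(x^2-y^2) + c*x + d = 0 := by linear_combination hre
  have him' : y*(a*(3*x^2-y^2) + 2*b*x + c) = 0 := by linear_combination him
  have hxpos : 0 < x := by
    rw [hx_def, hw_def]
    rw [Complex.div_re, ← add_div]
    have hns : 0 < Complex.normSq (z-1) := Complex.normSq_pos.mpr hne
    apply div_pos _ hns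
    have h1 : 1 < Complex.normSq z := by
      have := Complex.sq_norm z
      nlinarith
    rw [Complex.normSq_apply] at h1
    simp [Complex.add_re, Complex.sub_re, Complex.add_im, Complex.sub_im]
    nlinarith
  have hA : 0 ≤ a := mul_nonneg ht0 (by linarith)
  have hB : 0 ≤ b := mul_nonneg (by linarith) (by linarith)
  have hC : 0 ≤ c := mul_nonneg ht0 (by linarith)
  have hD : 0 ≤ d := mul_nonneg (by linarith) (by linarith)
  have hBC : a*d ≤ b*c := by
    rw [ha_def, hb_def, hc_def, hd_def]
    nlinarith [mul_nonneg (mul_nonneg ht0 (by linarith : (0:ℝ) ≤ 1 - t)) (by linarith : (0:ℝ) ≤ α₁ - α₂)]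
  have hsum : 0 < a+b+c+d := by
    have h2 : a+b+c+d = 2 := by rw [ha_def, hb_def, hc_def, hd_def]; ring
    linarith
  exact hurwitz_key a b c d x y hA hB hC hD hBC hsum hxpos hre' him'
end

section
/- Let α₁, α₂ ∈ [-1,1] with α₁ ≥ α₂, t ∈ [0,1], and define for z in the open unit disk E the rational function ω(z) = -z·[z³+(2t-1-2α₁t-2α₂(1-t))z²+(1+2α₂(1-t)-2α₁t)z+(2t-1)] / [(2t-1)z³+(1+2α₂(1-t)-2α₁t)z²+(2t-1-2α₁t-2α₂(1-t))z+1]. Then |ω(z)| < 1 for all z ∈ E (where the denominator is nonzero). -/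
private lemma keyS (x y a1 a2 : ℝ) (ha1 : a1 ≤ 1) (ha2 : -1 ≤ a2) (h5 : a2 ≤ a1)
    (hr : x^2 + y^2 ≤ 1) :
    0 ≤ (1-(x^2+y^2))^2 + 4*x^2 - 2*(a1+a2)*x*(1+(x^2+y^2)) + 4*a1*a2*(x^2+y^2)
        + 4*(a1-a2)*y^2 := by
  rcases le_total 0 x with hx | hx
  · have h1 : (0:ℝ) ≤ 1 + x^2 + y^2 - 2*x := by nlinarith [sq_nonneg (1-x), sq_nonneg y]
    nlinarith [sq_nonneg (x^2-y^2+1-2*a1*x), sq_nonneg (2*y*(x-a1)),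
      mul_nonneg (mul_nonneg (sub_nonneg.2 h5) hx) h1,
      mul_nonneg (sub_nonneg.2 h5)
        (mul_nonneg (add_nonneg (sq_nonneg x) (sq_nonneg y)) (sub_nonneg.2 ha1))]
  · have h1 : (0:ℝ) ≤ 1 + x^2 + y^2 + 2*x := by nlinarith [sq_nonneg (1+x), sq_nonneg y]
    nlinarith [sq_nonneg (x^2-y^2+1-2*a2*x), sq_nonneg (2*y*(x-a2)),
      mul_nonneg (mul_nonneg (sub_nonneg.2 h5) (neg_nonneg.2 hx)) h1,
      mul_nonneg (sub_nonneg.2 h5)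
        (mul_nonneg (add_nonneg (sq_nonneg x) (sq_nonneg y))
          (by linarith : (0:ℝ) ≤ 1 + a2))]

private lemma upos (x y a : ℝ) (hal : -1 ≤ a) (har : a ≤ 1) (hr : x^2 + y^2 < 1) :
    0 < (x^2-y^2-2*a*x+1)^2 + (2*y*(x-a))^2 := by
  rcases lt_or_ge (a^2) 1 with h | h
  · have h2 : (0:ℝ) < (1-(x^2+y^2))^2 := pow_pos (by linarith) 2
    linarith [sq_nonneg (2*x - a*(1+x^2+y^2)), mul_pos (by linarith : (0:ℝ) < 1 - a^2) h2]
  · have h1 : a^2 = 1 := by nlinarith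
    have h2 : (a-1)*(a+1) = 0 := by linear_combination h1
    rcases mul_eq_zero.1 h2 with h3 | h3
    · have ha : a = 1 := by linarith
      subst ha
      have hA : (0:ℝ) < 1+x^2+y^2 - 2*x := by nlinarith [sq_nonneg (1-x), sq_nonneg y]
      linarith [mul_pos hA hA]
    · have ha : a = -1 := by linarith
      subst ha
      have hA : (0:ℝ) < 2*x + (1+x^2+y^2) := by nlinarith [sq_nonneg (1+x), sq_nonneg y]
      linarith [mul_pos hA hA]

set_option maxHeartbeats 2000000 in
theorem stmt_11 (α₁ α₂ : ℝ) (hα₁ : α₁ ∈ Set.Icc (-1 : ℝ) 1) (hα₂ : α₂ ∈ Set.Icc (-1 : ℝ) 1)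
    (hle : α₂ ≤ α₁) (t : ℝ) (ht : t ∈ Set.Icc (0 : ℝ) 1) (z : ℂ)
    (hz : ‖z‖ < 1) :
    ‖z * (z ^ 3 + ((2*t - 1 - 2*α₁*t - 2*α₂*(1 - t) : ℝ) : ℂ) * z ^ 2
        + ((1 + 2*α₂*(1 - t) - 2*α₁*t : ℝ) : ℂ) * z + ((2*t - 1 : ℝ) : ℂ))‖
      < ‖((2*t - 1 : ℝ) : ℂ) * z ^ 3
        + ((1 + 2*α₂*(1 - t) - 2*α₁*t : ℝ) : ℂ) * z ^ 2
        + ((2*t - 1 - 2*α₁*t - 2*α₂*(1 - t) : ℝ) : ℂ) * z + 1‖ := by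
  obtain ⟨ha1l, ha1r⟩ := hα₁
  obtain ⟨ha2l, ha2r⟩ := hα₂
  obtain ⟨htl, htr⟩ := ht
  have hr : z.re^2 + z.im^2 < 1 := by
    have h := Complex.sq_norm z
    rw [Complex.normSq_apply] at h
    nlinarith [norm_nonneg z]
  have hx2 : z.re^2 < 1 := by nlinarith [sq_nonneg z.im]
  have hxl : -1 < z.re := by nlinarith [sq_nonneg (z.re+1)]
  have hxr : z.re < 1 := by nlinarith [sq_nonneg (z.re-1)]
  obtain ⟨P, hPdef⟩ : ∃ w : ℂ, w = (z+1) * (z*z - 2*(α₁:ℂ)*z + 1) := ⟨_, rfl⟩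
  obtain ⟨Q, hQdef⟩ : ∃ w : ℂ, w = (z-1) * (z*z - 2*(α₂:ℂ)*z + 1) := ⟨_, rfl⟩
  have hPre : P.re = z.re^3 - 3*z.re*z.im^2 + (1-2*α₁)*(z.re^2-z.im^2)
      + (1-2*α₁)*z.re + 1 := by
    rw [hPdef]
    simp only [Complex.mul_re, Complex.mul_im, Complex.add_re, Complex.add_im,
      Complex.sub_re, Complex.sub_im, Complex.one_re, Complex.one_im,
      Complex.ofReal_re, Complex.ofReal_im, Complex.re_ofNat, Complex.im_ofNat]
    ring
  have hPim : P.im = 3*z.re^2*z.im - z.im^3 + (1-2*α₁)*(2*z.re*z.im) + (1-2*α₁)*z.im := by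
    rw [hPdef]
    simp only [Complex.mul_re, Complex.mul_im, Complex.add_re, Complex.add_im,
      Complex.sub_re, Complex.sub_im, Complex.one_re, Complex.one_im,
      Complex.ofReal_re, Complex.ofReal_im, Complex.re_ofNat, Complex.im_ofNat]
    ring
  have hQre : Q.re = z.re^3 - 3*z.re*z.im^2 + (-1-2*α₂)*(z.re^2-z.im^2)
      + (1+2*α₂)*z.re - 1 := by
    rw [hQdef]
    simp only [Complex.mul_re, Complex.mul_im, Complex.add_re, Complex.add_im,
      Complex.sub_re, Complex.sub_im, Complex.one_re, Complex.one_im,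
      Complex.ofReal_re, Complex.ofReal_im, Complex.re_ofNat, Complex.im_ofNat]
    ring
  have hQim : Q.im = 3*z.re^2*z.im - z.im^3 + (-1-2*α₂)*(2*z.re*z.im) + (1+2*α₂)*z.im := by
    rw [hQdef]
    simp only [Complex.mul_re, Complex.mul_im, Complex.add_re, Complex.add_im,
      Complex.sub_re, Complex.sub_im, Complex.one_re, Complex.one_im,
      Complex.ofReal_re, Complex.ofReal_im, Complex.re_ofNat, Complex.im_ofNat]
    ring
  have hS := keyS z.re z.im α₁ α₂ ha1r ha2l hle hr.le
  have hcross : P.re*Q.re + P.im*Q.im ≤ 0 := by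
    rw [hPre, hPim, hQre, hQim]
    linarith [mul_nonneg (by linarith : (0:ℝ) ≤ 1 - (z.re^2+z.im^2)) hS]
  have hz1 : 0 < (z.re+1)^2 + z.im^2 := by
    nlinarith [mul_pos (show (0:ℝ) < z.re+1 by linarith) (show (0:ℝ) < z.re+1 by linarith),
      sq_nonneg z.im]
  have hz2 : 0 < (z.re-1)^2 + z.im^2 := by
    nlinarith [mul_pos (show (0:ℝ) < 1-z.re by linarith) (show (0:ℝ) < 1-z.re by linarith),
      sq_nonneg z.im]
  have hP0 : 0 < P.re^2 + P.im^2 := by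
    rw [hPre, hPim]
    linarith [mul_pos hz1 (upos z.re z.im α₁ ha1l ha1r hr)]
  have hQ0 : 0 < Q.re^2 + Q.im^2 := by
    rw [hQre, hQim]
    linarith [mul_pos hz2 (upos z.re z.im α₂ ha2l ha2r hr)]
  have hNeq : z ^ 3 + ((2*t - 1 - 2*α₁*t - 2*α₂*(1 - t) : ℝ) : ℂ) * z ^ 2
      + ((1 + 2*α₂*(1 - t) - 2*α₁*t : ℝ) : ℂ) * z + ((2*t - 1 : ℝ) : ℂ)
      = (t:ℂ) * P + ((1-t : ℝ):ℂ) * Q := by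
    rw [hPdef, hQdef]; push_cast; ring
  have hDeq : ((2*t - 1 : ℝ) : ℂ) * z ^ 3
      + ((1 + 2*α₂*(1 - t) - 2*α₁*t : ℝ) : ℂ) * z ^ 2
      + ((2*t - 1 - 2*α₁*t - 2*α₂*(1 - t) : ℝ) : ℂ) * z + 1
      = (t:ℂ) * P - ((1-t : ℝ):ℂ) * Q := by
    rw [hPdef, hQdef]; push_cast; ring
  rw [hNeq, hDeq]
  refine lt_of_pow_lt_pow_left₀ 2 (norm_nonneg _) ?_
  rw [Complex.sq_norm, Complex.sq_norm, Complex.normSq_mul]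
  have hzn : Complex.normSq z = z.re^2 + z.im^2 := by rw [Complex.normSq_apply]; ring
  have hNN : Complex.normSq ((t:ℂ) * P + ((1-t : ℝ):ℂ) * Q)
      = (t*P.re + (1-t)*Q.re)^2 + (t*P.im + (1-t)*Q.im)^2 := by
    rw [Complex.normSq_apply]
    simp only [Complex.add_re, Complex.add_im, Complex.mul_re, Complex.mul_im,
      Complex.ofReal_re, Complex.ofReal_im]
    ring
  have hDD : Complex.normSq ((t:ℂ) * P - ((1-t : ℝ):ℂ) * Q)
      = (t*P.re - (1-t)*Q.re)^2 + (t*P.im - (1-t)*Q.im)^2 := by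
    rw [Complex.normSq_apply]
    simp only [Complex.sub_re, Complex.sub_im, Complex.mul_re, Complex.mul_im,
      Complex.ofReal_re, Complex.ofReal_im]
    ring
  rw [hzn, hNN, hDD]
  have hAB : (t*P.re + (1-t)*Q.re)^2 + (t*P.im + (1-t)*Q.im)^2
      ≤ (t*P.re - (1-t)*Q.re)^2 + (t*P.im - (1-t)*Q.im)^2 := by
    nlinarith [mul_nonneg (mul_nonneg htl (by linarith : (0:ℝ) ≤ 1-t))
      (neg_nonneg.2 hcross)]
  have hBpos : 0 < (t*P.re - (1-t)*Q.re)^2 + (t*P.im - (1-t)*Q.im)^2 := by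
    rcases lt_or_ge 0 t with h0 | h0
    · nlinarith [mul_pos (mul_pos h0 h0) hP0,
        mul_nonneg (mul_nonneg htl (by linarith : (0:ℝ) ≤ 1-t))
          (neg_nonneg.2 hcross),
        mul_nonneg (mul_nonneg (by linarith : (0:ℝ) ≤ 1-t)
          (by linarith : (0:ℝ) ≤ 1-t)) hQ0.le]
    · have ht0 : t = 0 := le_antisymm h0 htl
      subst ht0
      ring_nf
      nlinarith [hQ0]
  have hnr0 : (0:ℝ) ≤ z.re^2 + z.im^2 := by positivity
  nlinarith [mul_le_mul_of_nonneg_left hAB hnr0,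
    mul_lt_mul_of_pos_right hr hBpos]
end

section
/- For θ ∈ (0,π), the function φ(z) = (1-z²)/((1+z·e^{iθ})(1+z·e^{-iθ})) satisfies Re[φ(z)] > 0 for all z in the open unit disk E. -/
theorem stmt_13 (θ : ℝ) (hθ : θ ∈ Set.Ioo (0 : ℝ) Real.pi) (z : ℂ)
    (hz : ‖z‖ < 1) :
    0 < ((1 - z ^ 2) /
      ((1 + z * Complex.exp (Complex.I * θ)) * (1 + z * Complex.exp (-Complex.I * θ)))).re := by
  obtain ⟨hθ0, hθπ⟩ := hθ
  set a := Complex.exp (Complex.I * θ) with ha_def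
  set b := Complex.exp (-Complex.I * θ) with hb_def
  have ha : ‖a‖ = 1 := by rw [ha_def, Complex.norm_exp]; simp
  have hb : ‖b‖ = 1 := by rw [hb_def, Complex.norm_exp]; simp
  have h1 : (1 + z * a) ≠ 0 := by
    intro h
    have hz1 : z * a = -1 := by linear_combination h
    have : ‖z * a‖ = 1 := by rw [hz1]; simp
    rw [norm_mul, ha, mul_one] at this
    linarith
  have h2 : (1 + z * b) ≠ 0 := by
    intro h
    have hz1 : z * b = -1 := by linear_combination h
    have : ‖z * b‖ = 1 := by rw [hz1]; simp
    rw [norm_mul, hb, mul_one] at this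
    linarith
  set c : ℝ := Real.cos θ with hc_def
  have hab : a * b = 1 := by
    rw [ha_def, hb_def, ← Complex.exp_add]
    ring_nf
    exact Complex.exp_zero
  have habs : a + b = 2 * (c : ℂ) := by
    rw [ha_def, hb_def, show Complex.I * (θ:ℂ) = (θ:ℂ) * Complex.I by ring,
        show -Complex.I * (θ:ℂ) = -(θ:ℂ) * Complex.I by ring, ← Complex.two_cos,
        hc_def, Complex.ofReal_cos]
  have hD : (1 + z * a) * (1 + z * b) = 1 + 2 * (c : ℂ) * z + z ^ 2 := by
    linear_combination z * habs + z ^ 2 * hab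
  have hre : ((1 - z ^ 2) / ((1 + z * a) * (1 + z * b))).re =
      ((1 - z ^ 2) * (starRingEnd ℂ) ((1 + z * a) * (1 + z * b))).re /
        Complex.normSq ((1 + z * a) * (1 + z * b)) := by
    simp only [Complex.div_re, Complex.mul_re, Complex.conj_re, Complex.conj_im]; ring
  rw [hre]
  apply div_pos
  · rw [hD]
    set x := z.re with hx
    set y := z.im with hy
    have hzn : x ^ 2 + y ^ 2 < 1 := by
      have := Complex.sq_norm z
      rw [Complex.normSq_apply] at this
      nlinarith [norm_nonneg z]
    have hs : 0 < Real.sin θ := Real.sin_pos_of_pos_of_lt_pi hθ0 hθπ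
    have hc2 : c ^ 2 < 1 := by nlinarith [Real.sin_sq_add_cos_sq θ]
    have hA : 0 < 1 - (x ^ 2 + y ^ 2) := by linarith
    have hB : 0 < 1 + x ^ 2 + y ^ 2 + 2 * c * x := by
      nlinarith [sq_nonneg (x + c), sq_nonneg y]
    have key : ((1 - z ^ 2) * (starRingEnd ℂ) (1 + 2 * (c : ℂ) * z + z ^ 2)).re =
        (1 - (x ^ 2 + y ^ 2)) * (1 + x ^ 2 + y ^ 2 + 2 * c * x) := by
      simp only [map_add, map_mul, map_one, map_pow, map_ofNat, Complex.conj_ofReal,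
        Complex.mul_re, Complex.mul_im, Complex.sub_re, Complex.sub_im, Complex.add_re,
        Complex.add_im, Complex.one_re, Complex.one_im, Complex.conj_re, Complex.conj_im,
        pow_two, ← hx, ← hy, Complex.ofReal_re, Complex.ofReal_im, Complex.re_ofNat, Complex.im_ofNat]
      ring
    rw [key]
    exact mul_pos hA hB
  · exact Complex.normSq_pos.mpr (mul_ne_zero h1 h2)
end
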